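/- The hyperspace C(S¹) of subcontinua of the unit circle, with the Hausdorff metric, is homeomorphic to the closed unit disk in the plane. -/

import Mathlib

open Metric TopologicalSpace

noncomputable section CircleHyperspace

open Complex Real Set

/-- The complex absolute value, as an absolute value (compatibility shim). -/
def Complex.abs : AbsoluteValue ℂ ℝ := IsAbsoluteValue.toAbsoluteValue (norm : ℂ → ℝ)

lemma Complex.norm_eq_abs (z : ℂ) : ‖z‖ = Complex.abs z := rfl

lemma Complex.abs_mul_exp_arg_mul_I (z : ℂ) :
    (Complex.abs z : ℂ) * Complex.exp (Complex.arg z * Complex.I) = z :=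
  Complex.norm_mul_exp_arg_mul_I z

lemma Complex.sq_abs (z : ℂ) : Complex.abs z ^ 2 = Complex.normSq z := Complex.sq_norm z

@[simp] lemma Complex.abs_ofReal (r : ℝ) : Complex.abs (r : ℂ) = |r| := Complex.norm_real r

lemma abs_circleMap_zero (R θ : ℝ) : Complex.abs (circleMap 0 R θ) = |R| :=
  norm_circleMap_zero R θ

lemma Complex.ext_abs_arg {x y : ℂ} (h₁ : Complex.abs x = Complex.abs y) (h₂ : x.arg = y.arg) :
    x = y := Complex.ext_norm_arg h₁ h₂

/-- Arc on the unit circle in `ℂ` centered at angle `c` with half-width `α`. -/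
def cArc (c α : ℝ) : Set ℂ := circleMap 0 1 '' Set.Icc (c - α) (c + α)

/-- The subcontinuum of the circle associated to a point of the disk. -/
def Kc (z : ℂ) : Set ℂ :=
  {x | x ∈ Metric.sphere (0:ℂ) 1 ∧
    -(Complex.abs z * Real.cos (π * Complex.abs z)) ≤ (starRingEnd ℂ z * x).re}

lemma cm_dist_le (s t : ℝ) : dist (circleMap 0 1 s) (circleMap 0 1 t) ≤ dist s t := by
  have := (lipschitzWith_circleMap (0:ℂ) 1).dist_le_mul s t
  simpa using this

lemma cm_eq_iff {s t : ℝ} : circleMap 0 1 s = circleMap 0 1 t ↔ ∃ k : ℤ, s = t + 2*π*k := by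
  simp only [circleMap, zero_add, Complex.ofReal_one, one_mul]
  rw [Complex.exp_eq_exp_iff_exists_int]
  constructor
  · rintro ⟨n, hn⟩
    refine ⟨n, ?_⟩
    have : ((s : ℂ) - (t + 2*π*n)) * I = 0 := by push_cast at hn ⊢; ring_nf; ring_nf at hn; linear_combination hn
    have h2 : ((s : ℂ) - (t + 2*π*n)) = 0 := by
      rcases mul_eq_zero.1 this with h | h
      · exact h
      · exact absurd h I_ne_zero
    have h3 : ((s:ℂ) : ℂ) = ((t + 2*π*n : ℝ) : ℂ) := by push_cast; linear_combination h2
    exact_mod_cast h3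
  · rintro ⟨k, hk⟩
    exact ⟨k, by push_cast [hk]; ring⟩

lemma sphere_eq_range : Metric.sphere (0:ℂ) 1 = Set.range (circleMap 0 1) := by
  rw [range_circleMap]; norm_num

lemma cm_mem_sphere (t : ℝ) : circleMap 0 1 t ∈ Metric.sphere (0:ℂ) 1 :=
  circleMap_mem_sphere 0 zero_le_one t

lemma exists_cm {x : ℂ} (hx : x ∈ Metric.sphere (0:ℂ) 1) : ∃ t, circleMap 0 1 t = x := by
  rw [sphere_eq_range] at hx; exact hx

lemma conj_cm_mul_re (c t : ℝ) :
    ((starRingEnd ℂ) (circleMap 0 1 c) * circleMap 0 1 t).re = Real.cos (t - c) := by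
  simp only [circleMap, zero_add, Complex.ofReal_one, one_mul]
  rw [← Complex.exp_conj]
  rw [show (starRingEnd ℂ) ((c:ℝ) * I) = -(c * I) by simp]
  rw [← Complex.exp_add]
  rw [show -((c:ℝ) * I) + t * I = ((t - c : ℝ) : ℂ) * I by push_cast; ring]
  exact Complex.exp_ofReal_mul_I_re _

lemma cArc_subset_sphere (c α : ℝ) : cArc c α ⊆ Metric.sphere (0:ℂ) 1 := by
  rintro x ⟨t, -, rfl⟩; exact cm_mem_sphere t

lemma cArc_nonempty (c : ℝ) {α : ℝ} (hα : 0 ≤ α) : (cArc c α).Nonempty :=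
  ⟨circleMap 0 1 c, c, by constructor <;> linarith, rfl⟩

lemma cArc_isCompact (c α : ℝ) : IsCompact (cArc c α) :=
  isCompact_Icc.image (continuous_circleMap 0 1)

lemma cArc_isConnected (c : ℝ) {α : ℝ} (hα : 0 ≤ α) : IsConnected (cArc c α) :=
  ⟨cArc_nonempty c hα, isPreconnected_Icc.image _ (continuous_circleMap 0 1).continuousOn⟩

lemma cArc_sphere (c : ℝ) : cArc c π = Metric.sphere (0:ℂ) 1 := by
  rw [sphere_eq_range, cArc,
    show Set.Icc (c - π) (c + π) = Set.Icc (c - π) ((c - π) + 2 * π) by ring_nf]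
  exact (periodic_circleMap 0 1).image_Icc Real.two_pi_pos _

lemma Kc_zero : Kc 0 = Metric.sphere (0:ℂ) 1 := by
  ext x; simp [Kc]

lemma Kc_eq_cArc {z : ℂ} (hz : z ≠ 0) (hz1 : Complex.abs z ≤ 1) {c : ℝ}
    (hc : circleMap 0 1 c = z / Complex.abs z) :
    Kc z = cArc c (π * (1 - Complex.abs z)) := by
  set r := Complex.abs z with hr_def
  have hr : 0 < r := by simpa [hr_def] using (Complex.abs.pos hz)
  set α := π * (1 - r) with hα_def
  have hα0 : 0 ≤ α := by
    have := Real.pi_pos; nlinarith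
  have hαπ : α ≤ π := by
    have := Real.pi_pos; nlinarith
  have hzcm : z = (r : ℂ) * circleMap 0 1 c := by
    rw [hc, mul_div_assoc', mul_comm, mul_div_assoc, div_self (by exact_mod_cast hr.ne'), mul_one]
  have hthr : -(r * Real.cos (π * r)) = r * Real.cos α := by
    rw [hα_def, show π * (1 - r) = π - π * r by ring, Real.cos_pi_sub]
    ring
  have hre : ∀ t : ℝ, ((starRingEnd ℂ) z * circleMap 0 1 t).re = r * Real.cos (t - c) := by
    intro t
    rw [hzcm, map_mul, show (starRingEnd ℂ) (r : ℂ) = (r : ℂ) by simp, mul_assoc,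
      Complex.re_ofReal_mul, conj_cm_mul_re]
  ext x
  constructor
  · rintro ⟨hxs, hxc⟩
    obtain ⟨t, rfl⟩ := exists_cm hxs
    set t' := toIocMod Real.two_pi_pos (c - π) t with ht'_def
    have ht'mem := toIocMod_mem_Ioc Real.two_pi_pos (c - π) t
    have hsub : t - t' = toIocDiv Real.two_pi_pos (c - π) t • (2 * π) :=
      self_sub_toIocMod Real.two_pi_pos (c - π) t
    have hcm : circleMap 0 1 t = circleMap 0 1 t' := by
      rw [cm_eq_iff]
      exact ⟨toIocDiv Real.two_pi_pos (c - π) t, by rw [zsmul_eq_mul] at hsub; linarith⟩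
    rw [hcm] at hxc ⊢
    rw [hre t'] at hxc
    rw [hthr] at hxc
    have hcos : Real.cos α ≤ Real.cos (t' - c) := le_of_mul_le_mul_left (by linarith) hr
    have habs : |t' - c| ≤ π := by
      rw [abs_le]
      constructor
      · have := ht'mem.1; linarith
      · have := ht'mem.2; linarith
    have : |t' - c| ≤ α := by
      by_contra hlt
      push_neg at hlt
      have := Real.strictAntiOn_cos ⟨hα0, hαπ⟩ ⟨abs_nonneg _, habs⟩ hlt
      rw [Real.cos_abs] at this
      linarith
    rw [abs_le] at this
    exact ⟨t', ⟨by linarith [this.1], by linarith [this.2]⟩, rfl⟩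
  · rintro ⟨s, hs, rfl⟩
    refine ⟨cm_mem_sphere s, ?_⟩
    rw [hre s, hthr]
    have h1 : |s - c| ≤ α := by
      rw [abs_le]; exact ⟨by linarith [hs.1], by linarith [hs.2]⟩
    have : Real.cos α ≤ Real.cos |s - c| :=
      Real.cos_le_cos_of_nonneg_of_le_pi (abs_nonneg _) hαπ h1
    rw [Real.cos_abs] at this
    have := mul_le_mul_of_nonneg_left this hr.le
    linarith

lemma clamp_spec {a b u : ℝ} (ha : 0 ≤ a) (hb : 0 ≤ b) (hu : |u| ≤ a) :
    |min b (max (-b) u)| ≤ b ∧ |u - min b (max (-b) u)| ≤ |a - b| := by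
  rw [abs_le] at hu
  have h2 := le_abs_self (a - b)
  have h3 := neg_abs_le (a - b)
  rcases le_total u (-b) with h1 | h1
  · rw [max_eq_left h1, min_eq_right (by linarith)]
    rw [abs_le, abs_le]
    refine ⟨⟨by linarith, by linarith⟩, by constructor <;> linarith⟩
  · rw [max_eq_right h1]
    rcases le_total u b with h4 | h4
    · rw [min_eq_right h4, abs_le, abs_le]
      refine ⟨⟨by linarith, by linarith⟩, by constructor <;> simp <;> linarith⟩
    · rw [min_eq_left h4, abs_le, abs_le]
      refine ⟨⟨by linarith, by linarith⟩, by constructor <;> linarith⟩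

lemma cArc_mem_dist (c c' : ℝ) {α α' : ℝ} (hα : 0 ≤ α) (hα' : 0 ≤ α') :
    ∀ x ∈ cArc c α, ∃ y ∈ cArc c' α', dist x y ≤ |c - c'| + |α - α'| := by
  rintro x ⟨s, hs, rfl⟩
  have hu : |s - c| ≤ α := abs_le.2 ⟨by linarith [hs.1], by linarith [hs.2]⟩
  obtain ⟨hv1, hv2⟩ := clamp_spec hα hα' hu
  set v := min α' (max (-α') (s - c)) with hv
  refine ⟨circleMap 0 1 (c' + v), ⟨c' + v, ?_, rfl⟩, ?_⟩
  · rw [abs_le] at hv1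
    exact ⟨by linarith [hv1.1], by linarith [hv1.2]⟩
  · refine le_trans (cm_dist_le _ _) ?_
    rw [Real.dist_eq]
    calc |s - (c' + v)| = |(c - c') + ((s - c) - v)| := by ring_nf
    _ ≤ |c - c'| + |(s - c) - v| := abs_add_le _ _
    _ ≤ |c - c'| + |α - α'| := by linarith

lemma cArc_hausdorffDist (c c' : ℝ) {α α' : ℝ} (hα : 0 ≤ α) (hα' : 0 ≤ α') :
    Metric.hausdorffDist (cArc c α) (cArc c' α') ≤ |c - c'| + |α - α'| := by
  apply Metric.hausdorffDist_le_of_mem_dist (by positivity)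
  · exact cArc_mem_dist c c' hα hα'
  · intro y hy
    obtain ⟨x, hx, hd⟩ := cArc_mem_dist c' c hα' hα y hy
    exact ⟨x, hx, by rwa [abs_sub_comm c' c, abs_sub_comm α' α] at hd⟩

lemma cArc_hausdorffDist_sphere (c : ℝ) {α : ℝ} (hα : 0 ≤ α) (hαπ : α ≤ π) :
    Metric.hausdorffDist (cArc c α) (Metric.sphere (0:ℂ) 1) ≤ π - α := by
  apply Metric.hausdorffDist_le_of_mem_dist (by linarith)
  · intro x hx
    exact ⟨x, cArc_subset_sphere c α hx, by rw [dist_self]; linarith⟩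
  · intro y hy
    obtain ⟨t, rfl⟩ := exists_cm hy
    set t' := toIocMod Real.two_pi_pos (c - π) t with ht'_def
    have ht'mem := toIocMod_mem_Ioc Real.two_pi_pos (c - π) t
    have hsub : t - t' = toIocDiv Real.two_pi_pos (c - π) t • (2 * π) :=
      self_sub_toIocMod Real.two_pi_pos (c - π) t
    have hcm : circleMap 0 1 t = circleMap 0 1 t' := by
      rw [cm_eq_iff]
      exact ⟨toIocDiv Real.two_pi_pos (c - π) t, by rw [zsmul_eq_mul] at hsub; linarith⟩
    have hu : |t' - c| ≤ π := by
      rw [abs_le]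
      exact ⟨by linarith [ht'mem.1], by linarith [ht'mem.2]⟩
    obtain ⟨hv1, hv2⟩ := clamp_spec Real.pi_pos.le hα hu
    set v := min α (max (-α) (t' - c)) with hv
    refine ⟨circleMap 0 1 (c + v), ⟨c + v, ?_, rfl⟩, ?_⟩
    · rw [abs_le] at hv1
      exact ⟨by linarith [hv1.1], by linarith [hv1.2]⟩
    · rw [hcm]
      refine le_trans (cm_dist_le _ _) ?_
      rw [Real.dist_eq]
      calc |t' - (c + v)| = |(t' - c) - v| := by ring_nf
      _ ≤ |π - α| := hv2
      _ = π - α := abs_of_nonneg (by linarith)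

lemma cm_arg {z : ℂ} (hz : z ≠ 0) : circleMap 0 1 (Complex.arg z) = z / Complex.abs z := by
  have h := Complex.abs_mul_exp_arg_mul_I z
  have hr : (Complex.abs z : ℂ) ≠ 0 := by
    exact_mod_cast (Complex.abs.pos hz).ne'
  field_simp [circleMap]
  simp only [circleMap, zero_add, Complex.ofReal_one, one_mul]
  linear_combination h

lemma cArc_shift (c α : ℝ) (k : ℤ) : cArc (c + 2*π*k) α = cArc c α := by
  unfold cArc
  ext x
  constructor
  · rintro ⟨s, hs, rfl⟩
    refine ⟨s - 2*π*k, ⟨by linarith [hs.1], by linarith [hs.2]⟩, ?_⟩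
    rw [cm_eq_iff]
    exact ⟨-k, by push_cast; ring⟩
  · rintro ⟨s, hs, rfl⟩
    refine ⟨s + 2*π*k, ⟨by linarith [hs.1], by linarith [hs.2]⟩, ?_⟩
    rw [cm_eq_iff]
    exact ⟨k, by ring⟩

lemma cArc_subset_interval {c d α β : ℝ} (hαπ : α < π) (hβ0 : 0 ≤ β) (hβπ : β < π)
    (hd : d ∈ Set.Icc (c - α) (c + α))
    (hsub : cArc d β ⊆ cArc c α) :
    Set.Icc (d - β) (d + β) ⊆ Set.Icc (c - α) (c + α) := by
  have hπ := Real.pi_pos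
  have hα0 : 0 ≤ α := by
    rcases hd with ⟨h1, h2⟩; linarith
  have key : ∀ t ∈ Set.Icc (d - β) (d + β), ∃ s ∈ Set.Icc (c - α) (c + α),
      ∃ k : ℤ, t = s + 2*π*k := by
    intro t ht
    have : circleMap 0 1 t ∈ cArc c α := hsub ⟨t, ht, rfl⟩
    obtain ⟨s, hs, hcm⟩ := this
    obtain ⟨k, hk⟩ := cm_eq_iff.1 hcm.symm
    exact ⟨s, hs, k, hk⟩
  have hup : d + β ≤ c + α := by
    by_contra h'
    push_neg at h'
    set t₀ := min (d + β) (c + π) with ht₀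
    have ht₀mem : t₀ ∈ Set.Icc (d - β) (d + β) := by
      constructor
      · rcases min_cases (d + β) (c + π) with ⟨h, -⟩ | ⟨h, -⟩ <;> rw [ht₀, h]
        · linarith
        · rcases hd with ⟨h1, h2⟩; linarith
      · exact min_le_left _ _
    obtain ⟨s, hs, k, hk⟩ := key t₀ ht₀mem
    have h1 : c + α < t₀ := lt_min h' (by linarith)
    have h2 : t₀ ≤ c + π := min_le_right _ _
    rcases le_or_gt k 0 with hk0 | hk0
    · have : (k : ℝ) ≤ 0 := by exact_mod_cast hk0
      nlinarith [hs.2]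
    · have : (1 : ℝ) ≤ (k : ℝ) := by exact_mod_cast hk0
      nlinarith [hs.1]
  have hlo : c - α ≤ d - β := by
    by_contra h'
    push_neg at h'
    set t₀ := max (d - β) (c - π) with ht₀
    have ht₀mem : t₀ ∈ Set.Icc (d - β) (d + β) := by
      constructor
      · exact le_max_left _ _
      · rcases max_cases (d - β) (c - π) with ⟨h, -⟩ | ⟨h, -⟩ <;> rw [ht₀, h]
        · linarith
        · rcases hd with ⟨h1, h2⟩; linarith
    obtain ⟨s, hs, k, hk⟩ := key t₀ ht₀mem
    have h1 : t₀ < c - α := max_lt h' (by linarith)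
    have h2 : c - π ≤ t₀ := le_max_right _ _
    rcases le_or_gt 0 k with hk0 | hk0
    · have : (0 : ℝ) ≤ (k : ℝ) := by exact_mod_cast hk0
      nlinarith [hs.1]
    · have : (k : ℝ) ≤ -1 := by exact_mod_cast Int.le_sub_one_of_lt hk0
      nlinarith [hs.2]
  exact Set.Icc_subset_Icc hlo hup

lemma cArc_inj {c d α β : ℝ} (hα0 : 0 ≤ α) (hαπ : α < π) (hβ0 : 0 ≤ β) (hβπ : β < π)
    (h : cArc c α = cArc d β) : α = β ∧ ∃ k : ℤ, d = c + 2*π*k := by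
  have hπ := Real.pi_pos
  -- move d into the window of c
  have hcmd : circleMap 0 1 d ∈ cArc c α := by
    rw [h]; exact ⟨d, ⟨by linarith, by linarith⟩, rfl⟩
  obtain ⟨d', hd'mem, hd'⟩ := hcmd
  obtain ⟨k, hk⟩ := cm_eq_iff.1 hd'
  have harc : cArc d' β = cArc d β := by
    rw [hk, cArc_shift]
  rw [← harc] at h
  have hsub1 : Set.Icc (d' - β) (d' + β) ⊆ Set.Icc (c - α) (c + α) :=
    cArc_subset_interval hαπ hβ0 hβπ hd'mem (h ▸ subset_rfl)
  have hcmem : c ∈ Set.Icc (d' - β) (d' + β) := by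
    have : circleMap 0 1 c ∈ cArc d' β := by
      rw [← h]; exact ⟨c, ⟨by linarith, by linarith⟩, rfl⟩
    obtain ⟨s, hs, hscm⟩ := this
    obtain ⟨m, hm⟩ := cm_eq_iff.1 hscm.symm
    have hs' : s ∈ Set.Icc (c - α) (c + α) := hsub1 hs
    have hm0 : m = 0 := by
      by_contra hm0
      rcases lt_or_gt_of_ne hm0 with h1 | h1
      · have : (m : ℝ) ≤ -1 := by exact_mod_cast Int.le_sub_one_of_lt h1
        nlinarith [hs'.1, hs'.2]
      · have : (1 : ℝ) ≤ (m : ℝ) := by exact_mod_cast h1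
        nlinarith [hs'.1, hs'.2]
    rw [hm0] at hm
    push_cast at hm
    simp at hm
    rw [hm]; exact hs
  have hsub2 : Set.Icc (c - α) (c + α) ⊆ Set.Icc (d' - β) (d' + β) :=
    cArc_subset_interval hβπ hα0 hαπ hcmem (h ▸ subset_rfl)
  have e1 : d' - β ≤ c - α := (hsub2 ⟨by linarith, by linarith⟩).1
  have e2 : c - α ≤ d' - β := (hsub1 ⟨by linarith, by linarith⟩).1
  have e3 : c + α ≤ d' + β := (hsub2 ⟨by linarith, by linarith⟩).2
  have e4 : d' + β ≤ c + α := (hsub1 ⟨by linarith, by linarith⟩).2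
  have hαβ : α = β := by linarith
  have hcd' : c = d' := by linarith
  exact ⟨hαβ, -k, by push_cast; linarith⟩

lemma Kc_ne_sphere {z : ℂ} (hz : z ≠ 0) (hz1 : Complex.abs z ≤ 1) :
    Kc z ≠ Metric.sphere (0:ℂ) 1 := by
  set r := Complex.abs z with hr_def
  have hr : 0 < r := by simpa [hr_def] using (Complex.abs.pos hz)
  intro h
  have hmem : -(z / (r:ℂ)) ∈ Metric.sphere (0:ℂ) 1 := by
    rw [Metric.mem_sphere, dist_zero_right, norm_neg, norm_div, Complex.norm_eq_abs,
      Complex.norm_real, Real.norm_eq_abs, abs_of_pos hr, ← hr_def, div_self hr.ne']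
  rw [← h] at hmem
  have hsq : z.re^2 + z.im^2 = r^2 := by
    rw [hr_def, Complex.sq_abs, Complex.normSq_apply]; ring
  have hre : ((starRingEnd ℂ) z * -(z / (r:ℂ))).re = -r := by
    simp only [Complex.mul_re, Complex.conj_re, Complex.conj_im, Complex.neg_re, Complex.neg_im,
      Complex.div_ofReal_re, Complex.div_ofReal_im]
    field_simp
    nlinarith [hsq]
  have hcond := hmem.2
  rw [hre] at hcond
  have hcos : Real.cos (π * r) < 1 := by
    have := Real.strictAntiOn_cos (Set.mem_Icc.2 ⟨le_refl 0, Real.pi_pos.le⟩)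
      (Set.mem_Icc.2 ⟨by positivity, by nlinarith [Real.pi_pos]⟩)
      (mul_pos Real.pi_pos hr)
    rw [Real.cos_zero] at this
    exact this
  nlinarith

lemma Kc_inj {z w : ℂ} (hz : Complex.abs z ≤ 1) (hw : Complex.abs w ≤ 1)
    (h : Kc z = Kc w) : z = w := by
  have hπ := Real.pi_pos
  rcases eq_or_ne z 0 with rfl | hz0
  · rcases eq_or_ne w 0 with rfl | hw0
    · rfl
    · exact absurd (h.symm.trans Kc_zero) (Kc_ne_sphere hw0 hw)
  · rcases eq_or_ne w 0 with rfl | hw0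
    · exact absurd (h.trans Kc_zero) (Kc_ne_sphere hz0 hz)
    · have hz' : 0 < Complex.abs z := Complex.abs.pos hz0
      have hw' : 0 < Complex.abs w := Complex.abs.pos hw0
      rw [Kc_eq_cArc hz0 hz (cm_arg hz0), Kc_eq_cArc hw0 hw (cm_arg hw0)] at h
      obtain ⟨hαβ, k, hk⟩ := cArc_inj (by nlinarith) (by nlinarith) (by nlinarith) (by nlinarith) h
      have habs : Complex.abs z = Complex.abs w := by
        have : π * (1 - Complex.abs z) = π * (1 - Complex.abs w) := hαβ
        nlinarith
      have hk0 : k = 0 := by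
        have h1 := Complex.neg_pi_lt_arg z
        have h2 := Complex.arg_le_pi z
        have h3 := Complex.neg_pi_lt_arg w
        have h4 := Complex.arg_le_pi w
        by_contra hk0
        rcases lt_or_gt_of_ne hk0 with hc | hc
        · have : (k : ℝ) ≤ -1 := by exact_mod_cast Int.le_sub_one_of_lt hc
          nlinarith
        · have : (1 : ℝ) ≤ (k : ℝ) := by exact_mod_cast hc
          nlinarith
      rw [hk0] at hk
      push_cast at hk
      simp at hk
      exact Complex.ext_abs_arg habs hk.symm

lemma subcontinuum_classify {A : Set ℂ} (hsub : A ⊆ Metric.sphere (0:ℂ) 1)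
    (hcomp : IsCompact A) (hconn : IsConnected A) :
    ∃ z : ℂ, Complex.abs z ≤ 1 ∧ Kc z = A := by
  have hπ := Real.pi_pos
  rcases eq_or_ne A (Metric.sphere (0:ℂ) 1) with rfl | hne
  · exact ⟨0, by simp, Kc_zero⟩
  have hnss : ¬ Metric.sphere (0:ℂ) 1 ⊆ A := fun hss => hne (le_antisymm hsub hss)
  obtain ⟨q, hq_s, hq⟩ := Set.not_subset.1 hnss
  obtain ⟨θ₀, rfl⟩ := exists_cm hq_s
  set T := circleMap 0 1 ⁻¹' A ∩ Set.Icc θ₀ (θ₀ + 2*π) with hT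
  have hTclosed : IsClosed (circleMap 0 1 ⁻¹' A) :=
    hcomp.isClosed.preimage (continuous_circleMap 0 1)
  have hTcomp : IsCompact T := isCompact_Icc.inter_left hTclosed
  have himg : circleMap 0 1 '' T = A := by
    apply Set.Subset.antisymm
    · rintro x ⟨t, ⟨ht1, -⟩, rfl⟩; exact ht1
    · intro x hx
      obtain ⟨t, rfl⟩ := exists_cm (hsub hx)
      set t' := toIocMod Real.two_pi_pos θ₀ t with ht'
      have hmem := toIocMod_mem_Ioc Real.two_pi_pos θ₀ t
      have hsubk : t - t' = toIocDiv Real.two_pi_pos θ₀ t • (2*π) :=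
        self_sub_toIocMod _ _ _
      rw [zsmul_eq_mul] at hsubk
      have hcm : circleMap 0 1 t' = circleMap 0 1 t := by
        rw [cm_eq_iff]
        exact ⟨-(toIocDiv Real.two_pi_pos θ₀ t), by push_cast; linarith⟩
      exact ⟨t', ⟨by rw [Set.mem_preimage, hcm]; exact hx, ⟨hmem.1.le, hmem.2⟩⟩, hcm⟩
  have hT_Ioo : T ⊆ Set.Ioo θ₀ (θ₀ + 2*π) := by
    rintro t ⟨ht1, ht2, ht3⟩
    constructor
    · rcases eq_or_lt_of_le ht2 with h | h
      · exact absurd (h ▸ ht1) hq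
      · exact h
    · rcases eq_or_lt_of_le ht3 with h | h
      · exfalso
        apply hq
        have : circleMap 0 1 θ₀ = circleMap 0 1 t := by
          rw [cm_eq_iff]; exact ⟨-1, by push_cast; linarith⟩
        rw [this]; exact ht1
      · exact h
  have hTne : T.Nonempty := by
    rcases hconn.nonempty with ⟨x, hx⟩
    rw [← himg] at hx
    obtain ⟨t, ht, -⟩ := hx
    exact ⟨t, ht⟩
  have hmapsTo : Set.MapsTo (circleMap 0 1) T A := fun t ht => ht.1
  have hinj : Set.InjOn (circleMap 0 1) T := by
    intro s hs t ht hst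
    obtain ⟨k, hk⟩ := cm_eq_iff.1 hst
    have h1 := hT_Ioo hs
    have h2 := hT_Ioo ht
    have hk0 : k = 0 := by
      by_contra hk0
      rcases lt_or_gt_of_ne hk0 with hc | hc
      · have : (k : ℝ) ≤ -1 := by exact_mod_cast Int.le_sub_one_of_lt hc
        nlinarith [h1.1, h1.2, h2.1, h2.2]
      · have : (1 : ℝ) ≤ (k : ℝ) := by exact_mod_cast hc
        nlinarith [h1.1, h1.2, h2.1, h2.2]
    rw [hk0] at hk
    push_cast at hk
    linarith
  have hbij : Set.BijOn (circleMap 0 1) T A := ⟨hmapsTo, hinj, by rw [← himg]; exact Set.subset_image_iff.2 ⟨T, subset_rfl, rfl⟩⟩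
  haveI : CompactSpace T := isCompact_iff_compactSpace.mp hTcomp
  have hFc : Continuous (hbij.equiv (circleMap 0 1)) := by
    exact (continuous_circleMap 0 1).restrict hmapsTo
  have homeo : T ≃ₜ A := hFc.homeoOfEquivCompactToT2
  haveI hAc : ConnectedSpace A := isConnected_iff_connectedSpace.mp hconn
  haveI hTc : ConnectedSpace T :=
    homeo.symm.surjective.connectedSpace homeo.symm.continuous
  have hTconn : IsConnected T := isConnected_iff_connectedSpace.mpr hTc
  have hab : T = Set.Icc (sInf T) (sSup T) := eq_Icc_of_connected_compact hTconn hTcomp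
  set a := sInf T with ha
  set b := sSup T with hb
  have hale : a ≤ b := by
    rcases hTne with ⟨t, ht⟩
    rw [hab] at ht
    exact le_trans ht.1 ht.2
  have haT : a ∈ T := by rw [hab]; exact ⟨le_refl a, hale⟩
  have hbT : b ∈ T := by rw [hab]; exact ⟨hale, le_refl b⟩
  have haIoo := hT_Ioo haT
  have hbIoo := hT_Ioo hbT
  set c := (a + b)/2 with hc
  set α := (b - a)/2 with hα
  have hα0 : 0 ≤ α := by rw [hα]; linarith
  have hαπ : α < π := by
    rw [hα]
    have := haIoo.1
    have := hbIoo.2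
    linarith
  have hA : A = cArc c α := by
    rw [← himg, hab]
    unfold cArc
    congr 1
    rw [hc, hα]
    congr 1 <;> ring
  have hr0 : 0 < 1 - α/π := by
    rw [sub_pos, div_lt_one hπ]; exact hαπ
  set z := ((1 - α/π : ℝ) : ℂ) * circleMap 0 1 c with hz
  have habs : Complex.abs z = 1 - α/π := by
    rw [hz, map_mul, abs_circleMap_zero, Complex.abs_ofReal, abs_of_pos hr0]
    norm_num
  have hz0 : z ≠ 0 := by
    intro h0
    rw [h0] at habs
    simp at habs
    linarith
  have hcm : circleMap 0 1 c = z / Complex.abs z := by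
    rw [habs, hz]
    have h1 : ((1 - α/π : ℝ) : ℂ) ≠ 0 := by exact_mod_cast hr0.ne'
    rw [mul_comm, mul_div_assoc, div_self h1, mul_one]
  have hz1 : Complex.abs z ≤ 1 := by
    rw [habs]
    have : 0 ≤ α/π := by positivity
    linarith
  refine ⟨z, hz1, ?_⟩
  rw [Kc_eq_cArc hz0 hz1 hcm, habs, hA]
  congr 1
  field_simp
  ring

lemma Kc_nonempty {z : ℂ} (hz : Complex.abs z ≤ 1) : (Kc z).Nonempty := by
  rcases eq_or_ne z 0 with rfl | hz0
  · rw [Kc_zero]; exact ⟨circleMap 0 1 0, cm_mem_sphere 0⟩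
  · rw [Kc_eq_cArc hz0 hz (cm_arg hz0)]
    exact cArc_nonempty _ (by nlinarith [Real.pi_pos, Complex.abs.nonneg z])

lemma Kc_isCompact {z : ℂ} (hz : Complex.abs z ≤ 1) : IsCompact (Kc z) := by
  rcases eq_or_ne z 0 with rfl | hz0
  · rw [Kc_zero]; exact isCompact_sphere 0 1
  · rw [Kc_eq_cArc hz0 hz (cm_arg hz0)]; exact cArc_isCompact _ _

lemma Kc_isConnected {z : ℂ} (hz : Complex.abs z ≤ 1) : IsConnected (Kc z) := by
  rcases eq_or_ne z 0 with rfl | hz0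
  · rw [Kc_zero, ← cArc_sphere 0]
    exact cArc_isConnected 0 Real.pi_pos.le
  · rw [Kc_eq_cArc hz0 hz (cm_arg hz0)]
    exact cArc_isConnected _ (by nlinarith [Real.pi_pos, Complex.abs.nonneg z])

lemma Kc_subset_sphere {z : ℂ} : Kc z ⊆ Metric.sphere (0:ℂ) 1 := fun _ hx => hx.1

lemma Kc_cont {z₀ : ℂ} (hz₀ : Complex.abs z₀ ≤ 1) {ε : ℝ} (hε : 0 < ε) :
    ∃ δ > 0, ∀ z : ℂ, Complex.abs z ≤ 1 → Complex.abs (z - z₀) < δ →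
      Metric.hausdorffDist (Kc z) (Kc z₀) < ε := by
  have hπ := Real.pi_pos
  rcases eq_or_ne z₀ 0 with rfl | hz₀0
  · refine ⟨ε / π, by positivity, fun z hz1 hzd => ?_⟩
    rcases eq_or_ne z 0 with rfl | hz0
    · rw [Metric.hausdorffDist_self_zero]; exact hε
    · rw [Kc_zero, Kc_eq_cArc hz0 hz1 (cm_arg hz0)]
      have h1 : Metric.hausdorffDist (cArc (Complex.arg z) (π * (1 - Complex.abs z)))
          (Metric.sphere (0:ℂ) 1) ≤ π - π * (1 - Complex.abs z) := by
        apply cArc_hausdorffDist_sphere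
        · nlinarith [Complex.abs.nonneg z]
        · nlinarith [Complex.abs.nonneg z]
      have h2 : π - π * (1 - Complex.abs z) = π * Complex.abs z := by ring
      have h3 : Complex.abs z < ε / π := by simpa using hzd
      calc Metric.hausdorffDist _ _ ≤ π * Complex.abs z := by rw [← h2]; exact h1
      _ < π * (ε / π) := by
          apply mul_lt_mul_of_pos_left h3 hπ
      _ = ε := by field_simp
  · -- continuity at a nonzero point
    set r₀ := Complex.abs z₀ with hr₀
    have hr₀pos : 0 < r₀ := Complex.abs.pos hz₀0
    -- continuity of z ↦ arg (z / z₀) at z₀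
    have hcont : ContinuousAt (fun z : ℂ => Complex.arg (z / z₀)) z₀ := by
      have h1 : ContinuousAt (fun z : ℂ => z / z₀) z₀ :=
        (continuous_id.div_const z₀).continuousAt
      have h2 : ContinuousAt Complex.arg ((fun z : ℂ => z / z₀) z₀) := by
        show ContinuousAt Complex.arg (z₀ / z₀)
        rw [div_self hz₀0]
        exact Complex.continuousAt_arg Complex.one_mem_slitPlane
      exact ContinuousAt.comp (g := Complex.arg) (f := fun z : ℂ => z / z₀) h2 h1
    rw [Metric.continuousAt_iff] at hcont
    obtain ⟨δ₁, hδ₁pos, hδ₁⟩ := hcont (ε/2) (by positivity)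
    refine ⟨min δ₁ (min r₀ (ε / (2 * π + 2))), by positivity, fun z hz1 hzd => ?_⟩
    have hzd1 : Complex.abs (z - z₀) < δ₁ := lt_of_lt_of_le hzd (min_le_left _ _)
    have hzdr : Complex.abs (z - z₀) < r₀ := lt_of_lt_of_le hzd ((min_le_right _ _).trans (min_le_left _ _))
    have hzdε : Complex.abs (z - z₀) < ε / (2 * π + 2) :=
      lt_of_lt_of_le hzd ((min_le_right _ _).trans (min_le_right _ _))
    have hz0 : z ≠ 0 := by
      intro h0
      rw [h0, zero_sub, map_neg_eq_map] at hzdr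
      rw [← hr₀] at hzdr
      exact lt_irrefl _ hzdr
    have habsz : 0 < Complex.abs z := Complex.abs.pos hz0
    -- angle function
    set F := Complex.arg z₀ + Complex.arg (z / z₀) with hF
    have hFcm : circleMap 0 1 F = z / Complex.abs z := by
      have hcm2 : circleMap 0 1 F = circleMap 0 1 (Complex.arg z₀) * circleMap 0 1 (Complex.arg (z / z₀)) := by
        simp only [circleMap, zero_add, Complex.ofReal_one, one_mul, hF]
        rw [← Complex.exp_add]
        congr 1
        push_cast
        ring
      rw [hcm2, cm_arg hz₀0, cm_arg (div_ne_zero hz0 hz₀0), map_div₀]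
      have h2 : (Complex.abs z : ℂ) ≠ 0 := by exact_mod_cast habsz.ne'
      have h3 : (r₀ : ℂ) ≠ 0 := by exact_mod_cast hr₀pos.ne'
      have h4 : z₀ ≠ 0 := hz₀0
      push_cast
      rw [← hr₀]
      field_simp
    -- Hausdorff estimate
    rw [Kc_eq_cArc hz0 hz1 hFcm, Kc_eq_cArc hz₀0 hz₀ (cm_arg hz₀0)]
    have hd1 : Metric.hausdorffDist (cArc F (π * (1 - Complex.abs z)))
        (cArc (Complex.arg z₀) (π * (1 - r₀))) ≤
        |F - Complex.arg z₀| + |π * (1 - Complex.abs z) - π * (1 - r₀)| := by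
      apply cArc_hausdorffDist
      · nlinarith [Complex.abs.nonneg z]
      · nlinarith
    have he1 : |F - Complex.arg z₀| < ε/2 := by
      have := hδ₁ (by rwa [Complex.dist_eq] : dist z z₀ < δ₁)
      rw [Real.dist_eq, div_self hz₀0, Complex.arg_one, sub_zero] at this
      rw [hF]
      simpa using this
    have he2 : |π * (1 - Complex.abs z) - π * (1 - r₀)| < ε/2 := by
      have habs : |Complex.abs z - r₀| ≤ Complex.abs (z - z₀) := by
        rw [hr₀]
        simpa [Complex.norm_eq_abs] using abs_norm_sub_norm_le z z₀
      have : |π * (1 - Complex.abs z) - π * (1 - r₀)| = π * |Complex.abs z - r₀| := by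
        rw [show π * (1 - Complex.abs z) - π * (1 - r₀) = -(π * (Complex.abs z - r₀)) by ring,
          abs_neg, abs_mul, abs_of_pos hπ]
      rw [this]
      calc π * |Complex.abs z - r₀| ≤ π * Complex.abs (z - z₀) :=
            mul_le_mul_of_nonneg_left habs hπ.le
      _ < π * (ε / (2 * π + 2)) := mul_lt_mul_of_pos_left hzdε hπ
      _ < ε / 2 := by
          rw [show π * (ε / (2 * π + 2)) = ε * (π / (2 * π + 2)) by ring]
          have h5 : π / (2 * π + 2) < 1 / 2 := by
            rw [div_lt_div_iff₀ (by linarith) (by norm_num)]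
            linarith
          calc ε * (π / (2 * π + 2)) < ε * (1/2) := mul_lt_mul_of_pos_left h5 hε
          _ = ε / 2 := by ring
    linarith [hd1, he1, he2]

/-- Identification of `ℂ` with the Euclidean plane. -/
def liE : ℂ ≃ₗᵢ[ℝ] EuclideanSpace ℝ (Fin 2) :=
  Complex.isometryOfOrthonormal (EuclideanSpace.basisFun (Fin 2) ℝ)

end CircleHyperspace

/-- The unit circle in the Euclidean plane. -/
noncomputable abbrev UnitCircle : Set (EuclideanSpace ℝ (Fin 2)) :=
  Metric.sphere (0 : EuclideanSpace ℝ (Fin 2)) 1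

/-- The hyperspace of subcontinua of the unit circle, with the Hausdorff metric. -/
def HyperspaceCircle : Type :=
  { K : NonemptyCompacts UnitCircle // IsConnected (K : Set UnitCircle) }

noncomputable instance : MetricSpace HyperspaceCircle :=
  Subtype.metricSpace

noncomputable section Assembly

open Complex Real Set

lemma liE_image_sphere : liE '' Metric.sphere (0:ℂ) 1 = (UnitCircle : Set (EuclideanSpace ℝ (Fin 2))) := by
  rw [liE.image_sphere 0 1, map_zero]

lemma li_Kc_subset {z : ℂ} : liE '' Kc z ⊆ (UnitCircle : Set (EuclideanSpace ℝ (Fin 2))) := by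
  rw [← liE_image_sphere]
  exact Set.image_mono Kc_subset_sphere

/-- The set of the hyperspace element associated to `z`. -/
def hcSet (z : ℂ) : Set UnitCircle := Subtype.val ⁻¹' (liE '' Kc z)

lemma val_image_hcSet (z : ℂ) : Subtype.val '' hcSet z = liE '' Kc z := by
  rw [hcSet, Subtype.image_preimage_coe]
  exact Set.inter_eq_self_of_subset_right li_Kc_subset

lemma hcSet_isCompact {z : ℂ} (hz : Complex.abs z ≤ 1) : IsCompact (hcSet z) := by
  rw [Topology.IsEmbedding.subtypeVal.isCompact_iff, val_image_hcSet]
  exact (Kc_isCompact hz).image liE.continuous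

lemma hcSet_nonempty {z : ℂ} (hz : Complex.abs z ≤ 1) : (hcSet z).Nonempty := by
  obtain ⟨x, hx⟩ := Kc_nonempty hz
  exact ⟨⟨liE x, li_Kc_subset ⟨x, hx, rfl⟩⟩, ⟨x, hx, rfl⟩⟩

lemma hcSet_isConnected {z : ℂ} (hz : Complex.abs z ≤ 1) : IsConnected (hcSet z) := by
  refine ⟨hcSet_nonempty hz, ?_⟩
  rw [← Topology.IsInducing.subtypeVal.isPreconnected_image]
  rw [val_image_hcSet]
  exact ((Kc_isConnected hz).image _ liE.continuous.continuousOn).isPreconnected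

lemma abs_li_symm (p : Metric.closedBall (0 : EuclideanSpace ℝ (Fin 2)) 1) :
    Complex.abs (liE.symm (p : EuclideanSpace ℝ (Fin 2))) ≤ 1 := by
  rw [← Complex.norm_eq_abs, liE.symm.norm_map]
  exact mem_closedBall_zero_iff.mp p.2

/-- The homeomorphism, as a function from the disk to the hyperspace. -/
def Phi (p : Metric.closedBall (0 : EuclideanSpace ℝ (Fin 2)) 1) : HyperspaceCircle :=
  ⟨⟨⟨hcSet (liE.symm (p : EuclideanSpace ℝ (Fin 2))), hcSet_isCompact (abs_li_symm p)⟩,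
    hcSet_nonempty (abs_li_symm p)⟩, hcSet_isConnected (abs_li_symm p)⟩

lemma Phi_coe (p : Metric.closedBall (0 : EuclideanSpace ℝ (Fin 2)) 1) :
    ((Phi p).1 : Set UnitCircle) = hcSet (liE.symm (p : EuclideanSpace ℝ (Fin 2))) := rfl

lemma Phi_dist (p q : Metric.closedBall (0 : EuclideanSpace ℝ (Fin 2)) 1) :
    dist (Phi p) (Phi q) = Metric.hausdorffDist
      (Kc (liE.symm (p : EuclideanSpace ℝ (Fin 2)))) (Kc (liE.symm (q : EuclideanSpace ℝ (Fin 2)))) := by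
  rw [show dist (Phi p) (Phi q) = dist (Phi p).1 (Phi q).1 from rfl, NonemptyCompacts.dist_eq]
  rw [← Metric.hausdorffDist_image isometry_subtype_coe]
  show Metric.hausdorffDist (Subtype.val '' hcSet _) (Subtype.val '' hcSet _) = _
  rw [val_image_hcSet, val_image_hcSet, Metric.hausdorffDist_image liE.isometry]

lemma Phi_inj : Function.Injective Phi := by
  intro p q h
  have h1 : hcSet (liE.symm (p : EuclideanSpace ℝ (Fin 2)))
      = hcSet (liE.symm (q : EuclideanSpace ℝ (Fin 2))) := by
    have := congrArg (fun X : HyperspaceCircle => (X.1 : Set UnitCircle)) h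
    simpa [Phi_coe] using this
  have h2 : liE '' Kc (liE.symm (p : EuclideanSpace ℝ (Fin 2)))
      = liE '' Kc (liE.symm (q : EuclideanSpace ℝ (Fin 2))) := by
    rw [← val_image_hcSet, ← val_image_hcSet, h1]
  have h3 := liE.injective.image_injective h2
  have h4 := Kc_inj (abs_li_symm p) (abs_li_symm q) h3
  apply Subtype.ext
  have := congrArg liE h4
  simpa using this

lemma Phi_surj : Function.Surjective Phi := by
  intro X
  set B := Subtype.val '' (X.1 : Set UnitCircle) with hB
  set A := ⇑liE.symm '' B with hA
  have hAsub : A ⊆ Metric.sphere (0:ℂ) 1 := by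
    rintro x ⟨y, hy, rfl⟩
    have hy1 : y ∈ (UnitCircle : Set (EuclideanSpace ℝ (Fin 2))) := by
      rcases hy with ⟨w, -, rfl⟩
      exact w.2
    rw [mem_sphere_zero_iff_norm] at hy1 ⊢
    rw [liE.symm.norm_map]
    exact hy1
  have hAcomp : IsCompact A :=
    ((X.1.isCompact.image continuous_subtype_val).image liE.symm.continuous)
  have hAconn : IsConnected A :=
    ((X.2.image _ continuous_subtype_val.continuousOn).image _ liE.symm.continuous.continuousOn)
  obtain ⟨z, hz1, hzA⟩ := subcontinuum_classify hAsub hAcomp hAconn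
  have hmem : liE z ∈ Metric.closedBall (0 : EuclideanSpace ℝ (Fin 2)) 1 := by
    rw [mem_closedBall_zero_iff, liE.norm_map, Complex.norm_eq_abs]
    exact hz1
  refine ⟨⟨liE z, hmem⟩, ?_⟩
  apply Subtype.ext
  apply NonemptyCompacts.ext
  show hcSet (liE.symm (liE z)) = (X.1 : Set UnitCircle)
  rw [liE.symm_apply_apply, hcSet, hzA, hA]
  have himg : ⇑liE '' (⇑liE.symm '' B) = B := by
    rw [Set.image_image]
    simp only [liE.apply_symm_apply]
    exact Set.image_id B
  rw [himg, hB]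
  exact Set.preimage_image_eq _ Subtype.val_injective

lemma Phi_cont : Continuous Phi := by
  rw [Metric.continuous_iff]
  intro p ε hε
  obtain ⟨δ, hδpos, hδ⟩ := Kc_cont (abs_li_symm p) hε
  refine ⟨δ, hδpos, fun q hq => ?_⟩
  rw [Phi_dist]
  apply hδ _ (abs_li_symm q)
  have heq : Complex.abs (liE.symm (q : EuclideanSpace ℝ (Fin 2)) - liE.symm (p : EuclideanSpace ℝ (Fin 2)))
      = dist (q : EuclideanSpace ℝ (Fin 2)) (p : EuclideanSpace ℝ (Fin 2)) := by
    rw [← Complex.norm_eq_abs, ← map_sub, liE.symm.norm_map, dist_eq_norm]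
  rw [heq]
  rwa [Subtype.dist_eq] at hq

end Assembly

theorem hyperspace_circle_homeo_disk :
    Nonempty (HyperspaceCircle ≃ₜ
      (Metric.closedBall (0 : EuclideanSpace ℝ (Fin 2)) 1)) := by
  haveI : CompactSpace (Metric.closedBall (0 : EuclideanSpace ℝ (Fin 2)) 1) :=
    isCompact_iff_compactSpace.mp (isCompact_closedBall 0 1)
  have hcont : Continuous (Equiv.ofBijective Phi ⟨Phi_inj, Phi_surj⟩ :
      Metric.closedBall (0 : EuclideanSpace ℝ (Fin 2)) 1 → HyperspaceCircle) := Phi_cont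
  exact ⟨(hcont.homeoOfEquivCompactToT2).symm⟩
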